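/- Let W, U, V be finite types and μ a probability mass function on W × U × V, defining jointly distributed random variables (Z, X, Y). Then ∑_{(x,y) : Pr[X=x,Y=y] > 0} Pr[X = x, Y = y] · ‖(law of Z given X = x) − (law of Z given X = x, Y = y)‖² ≤ (ln 2 / 2) · I(Z;Y | X). -/

import Mathlib

open scoped BigOperators

open Classical in
/-- Probability of the event `p` under the mass function `μ`. -/
noncomputable def pr {Ω : Type*} [Fintype Ω] (μ : Ω → ℝ) (p : Ω → Prop) : ℝ :=
  ∑ ω, if p ω then μ ω else 0

/-- Conditional law of the random variable `f` given the event `p`. -/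
noncomputable def condLaw {Ω α : Type*} [Fintype Ω] (μ : Ω → ℝ) (f : Ω → α) (p : Ω → Prop)
    (a : α) : ℝ :=
  pr μ (fun ω => f ω = a ∧ p ω) / pr μ p

/-- Base-2 entropy of a mass function on a finite type. -/
noncomputable def entropyOf {α : Type*} [Fintype α] (q : α → ℝ) : ℝ :=
  -∑ a, q a * Real.logb 2 (q a)

/-- Conditional entropy `H(f | g)` of random variables `f`, `g` under `μ`. -/
noncomputable def condEntropy {Ω α β : Type*} [Fintype Ω] [Fintype α] [Fintype β]
    (μ : Ω → ℝ) (f : Ω → α) (g : Ω → β) : ℝ :=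
  ∑ b, pr μ (fun ω => g ω = b) * entropyOf (condLaw μ f (fun ω => g ω = b))

/-- Conditional mutual information `I(f ; g | h)` under `μ`. -/
noncomputable def condMutualInfo {Ω α β γ : Type*} [Fintype Ω] [Fintype α] [Fintype β]
    [Fintype γ] (μ : Ω → ℝ) (f : Ω → α) (g : Ω → β) (h : Ω → γ) : ℝ :=
  condEntropy μ f h + condEntropy μ g h - condEntropy μ (fun ω => (f ω, g ω)) h

/-- Total variation distance between two mass functions on a finite type. -/
noncomputable def tvDist {α : Type*} [Fintype α] (p q : α → ℝ) : ℝ :=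
  (1 / 2) * ∑ a, |p a - q a|


lemma gamma_hasDeriv (q : ℝ) (hq : 0 < q) {p : ℝ} (hp : 0 < p) :
    HasDerivAt (fun p => Real.log p - Real.log q - 6*(p-q)*(p+5*q)/(2*p+4*q)^2)
      (p⁻¹ - 216*q^2/(2*p+4*q)^3) p := by
  have hden : (2*p+4*q) ≠ 0 := by positivity
  have hN : HasDerivAt (fun p : ℝ => 6*(p-q)*(p+5*q))
      ((6*1)*(p+5*q) + (6*(p-q))*1) p :=
    (((hasDerivAt_id p).sub_const q).const_mul 6).mul ((hasDerivAt_id p).add_const (5*q))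
  have hM : HasDerivAt (fun p : ℝ => (2*p+4*q)^2)
      (2*(2*p+4*q)^(2-1)*(2*1)) p := by
    exact_mod_cast (((hasDerivAt_id p).const_mul 2).add_const (4*q)).pow 2
  have hQ := hN.div hM (by positivity)
  have hL := (Real.hasDerivAt_log hp.ne').sub_const (Real.log q)
  have h := hL.sub hQ
  refine h.congr_deriv ?_
  field_simp
  ring

lemma gamma_mono (q : ℝ) (hq : 0 < q) :
    MonotoneOn (fun p => Real.log p - Real.log q - 6*(p-q)*(p+5*q)/(2*p+4*q)^2)
      (Set.Ioi 0) := by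
  apply monotoneOn_of_hasDerivWithinAt_nonneg (convex_Ioi 0)
    (f' := fun p => p⁻¹ - 216*q^2/(2*p+4*q)^3)
  · intro x hx
    exact (gamma_hasDeriv q hq hx).continuousAt.continuousWithinAt
  · intro x hx
    rw [interior_Ioi] at hx
    exact (gamma_hasDeriv q hq hx).hasDerivWithinAt
  · intro x hx
    rw [interior_Ioi] at hx
    have hx' : (0:ℝ) < x := hx
    rw [sub_nonneg, div_le_iff₀ (by positivity), inv_mul_eq_div, le_div_iff₀ hx']
    nlinarith [sq_nonneg (x - q), mul_pos hx hq, sq_nonneg q, mul_nonneg (mul_nonneg hx.le hx.le) hq.le, mul_nonneg (mul_nonneg hq.le hq.le) hx.le]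

lemma phi_hasDeriv (q : ℝ) (hq : 0 < q) {p : ℝ} (hp : 0 < p) :
    HasDerivAt (fun p => p*(Real.log p - Real.log q) - p + q - 3*(p-q)^2/(2*p+4*q))
      (Real.log p - Real.log q - 6*(p-q)*(p+5*q)/(2*p+4*q)^2) p := by
  have hden : (2*p+4*q) ≠ 0 := by positivity
  have hN : HasDerivAt (fun p : ℝ => 3*(p-q)^2) (3*(2*(p-q)^(2-1)*1)) p :=
    (((hasDerivAt_id p).sub_const q).pow 2).const_mul 3
  have hM : HasDerivAt (fun p : ℝ => 2*p+4*q) (2*1) p :=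
    ((hasDerivAt_id p).const_mul 2).add_const (4*q)
  have hQ := hN.div hM hden
  have hL : HasDerivAt (fun p : ℝ => p*(Real.log p - Real.log q))
      (1*(Real.log p - Real.log q) + p * p⁻¹) p :=
    (hasDerivAt_id p).mul ((Real.hasDerivAt_log hp.ne').sub_const (Real.log q))
  have h := (((hL.sub (hasDerivAt_id p)).add_const q).sub hQ)
  refine h.congr_deriv ?_
  rw [mul_inv_cancel₀ hp.ne']
  field_simp
  ring

lemma phi_nonneg (q : ℝ) (hq : 0 < q) {p : ℝ} (hp : 0 ≤ p) :
    0 ≤ p*(Real.log p - Real.log q) - p + q - 3*(p-q)^2/(2*p+4*q) := by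
  set Φ : ℝ → ℝ := fun p => p*(Real.log p - Real.log q) - p + q - 3*(p-q)^2/(2*p+4*q) with hΦ
  set Γ : ℝ → ℝ := fun p => Real.log p - Real.log q - 6*(p-q)*(p+5*q)/(2*p+4*q)^2 with hΓ
  have hΓq : Γ q = 0 := by simp [hΓ]
  have hΦq : Φ q = 0 := by simp [hΦ]
  rcases eq_or_lt_of_le hp with rfl | hp
  · have : Φ 0 = q - 3*q^2/(4*q) := by simp [hΦ]
    rw [show (0:ℝ)*(Real.log 0 - Real.log q) - 0 + q - 3*(0-q)^2/(2*0+4*q)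
        = q - 3*q^2/(4*q) by ring_nf]
    rw [div_eq_mul_inv, mul_inv, show (3:ℝ)*q^2*(4⁻¹*q⁻¹) = (3/4)*(q*q⁻¹)*q by ring,
      mul_inv_cancel₀ hq.ne']
    linarith
  · show 0 ≤ Φ p
    rcases le_total q p with hqp | hpq
    · have hmono : MonotoneOn Φ (Set.Icc q p) := by
        apply monotoneOn_of_hasDerivWithinAt_nonneg (convex_Icc q p) (f' := Γ)
        · intro x hx
          exact (phi_hasDeriv q hq (lt_of_lt_of_le hq hx.1)).continuousAt.continuousWithinAt
        · intro x hx
          rw [interior_Icc] at hx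
          exact (phi_hasDeriv q hq (lt_trans hq hx.1)).hasDerivWithinAt
        · intro x hx
          rw [interior_Icc] at hx
          rw [← hΓq]
          exact gamma_mono q hq hq (lt_trans hq hx.1) hx.1.le
      have := hmono (Set.left_mem_Icc.2 hqp) (Set.right_mem_Icc.2 hqp) hqp
      rw [hΦq] at this; exact this
    · have hanti : AntitoneOn Φ (Set.Icc p q) := by
        apply antitoneOn_of_hasDerivWithinAt_nonpos (convex_Icc p q) (f' := Γ)
        · intro x hx
          exact (phi_hasDeriv q hq (lt_of_lt_of_le hp hx.1)).continuousAt.continuousWithinAt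
        · intro x hx
          rw [interior_Icc] at hx
          exact (phi_hasDeriv q hq (lt_trans hp hx.1)).hasDerivWithinAt
        · intro x hx
          rw [interior_Icc] at hx
          rw [← hΓq]
          exact gamma_mono q hq (lt_trans hp hx.1) hq hx.2.le
      have := hanti (Set.left_mem_Icc.2 hpq) (Set.right_mem_Icc.2 hpq) hpq
      rw [hΦq] at this; exact this

lemma pinsker_sum {α : Type*} [Fintype α] (P Q : α → ℝ)
    (hP0 : ∀ a, 0 ≤ P a) (hQ0 : ∀ a, 0 ≤ Q a)
    (hP1 : ∑ a, P a = 1) (hQ1 : ∑ a, Q a = 1)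
    (hac : ∀ a, Q a = 0 → P a = 0) :
    ((1/2) * ∑ a, |Q a - P a|)^2 ≤ (1/2) * ∑ a, P a * Real.log (P a / Q a) := by
  have step1 : ∀ a, 3*(P a - Q a)^2/(2*P a+4*Q a)
      ≤ P a * Real.log (P a / Q a) - P a + Q a := by
    intro a
    rcases eq_or_lt_of_le (hQ0 a) with hQ | hQ
    · rw [← hQ, hac a hQ.symm]; simp
    rcases eq_or_lt_of_le (hP0 a) with hP | hP
    · rw [← hP]
      rw [show (3:ℝ)*(0 - Q a)^2/(2*0+4*Q a) = 3*Q a^2/(4*Q a) by ring_nf]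
      rw [div_eq_mul_inv, mul_inv,
        show (3:ℝ)*Q a^2*(4⁻¹*(Q a)⁻¹) = (3/4)*(Q a*(Q a)⁻¹)*Q a by ring,
        mul_inv_cancel₀ hQ.ne']
      simp; linarith
    · have := phi_nonneg (Q a) hQ (le_of_lt hP)
      rw [Real.log_div hP.ne' hQ.ne']
      linarith
  have step2 : ∑ a, 3*(P a - Q a)^2/(2*P a+4*Q a) ≤ ∑ a, P a * Real.log (P a / Q a) := by
    have h := Finset.sum_le_sum (s := Finset.univ) (fun a (_ : a ∈ Finset.univ) => step1 a)
    rw [Finset.sum_add_distrib, Finset.sum_sub_distrib, hP1, hQ1] at h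
    linarith
  -- Cauchy-Schwarz
  set m : α → ℝ := fun a => (2*P a+4*Q a)/3 with hm
  have hm0 : ∀ a, 0 ≤ m a := fun a => by
    have := hP0 a; have := hQ0 a; positivity
  have hsum_m : ∑ a, m a = 2 := by
    simp only [hm, div_eq_mul_inv, ← Finset.sum_mul, Finset.sum_add_distrib,
      ← Finset.mul_sum, hP1, hQ1]
    norm_num
  have hCS := Finset.sum_mul_sq_le_sq_mul_sq Finset.univ
    (fun a => |P a - Q a| / Real.sqrt (m a)) (fun a => Real.sqrt (m a))
  have hfg : ∀ a, |P a - Q a| / Real.sqrt (m a) * Real.sqrt (m a) = |P a - Q a| := by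
    intro a
    rcases eq_or_lt_of_le (hm0 a) with h | h
    · have hP' : P a = 0 := by
        have := hP0 a; have := hQ0 a
        simp only [hm] at h; nlinarith [h.symm]
      have hQ' : Q a = 0 := by
        have := hP0 a; have := hQ0 a
        simp only [hm] at h; nlinarith [h.symm]
      simp [hP', hQ']
    · rw [div_mul_cancel₀]
      exact ne_of_gt (Real.sqrt_pos.2 h)
  have hf2 : ∀ a, (|P a - Q a| / Real.sqrt (m a))^2 = (P a - Q a)^2 / m a := by
    intro a
    rw [div_pow, sq_abs, Real.sq_sqrt (hm0 a)]
  have hg2 : ∀ a, (Real.sqrt (m a))^2 = m a := fun a => Real.sq_sqrt (hm0 a)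
  simp only [hfg, hf2, hg2] at hCS
  rw [hsum_m] at hCS
  have hdm : ∀ a, (P a - Q a)^2 / m a = 3*(P a - Q a)^2/(2*P a+4*Q a) := by
    intro a
    rw [hm, div_div_eq_mul_div]; ring_nf
  simp only [hdm] at hCS
  have habs : ∀ a, |Q a - P a| = |P a - Q a| := fun a => abs_sub_comm _ _
  simp only [habs]
  have h1 : (∑ a, |P a - Q a|)^2 ≤ 2 * ∑ a, P a * Real.log (P a / Q a) := by
    calc (∑ a, |P a - Q a|)^2 ≤ (∑ a, 3*(P a - Q a)^2/(2*P a+4*Q a)) * 2 := hCS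
    _ ≤ (∑ a, P a * Real.log (P a / Q a)) * 2 := by
        apply mul_le_mul_of_nonneg_right step2; norm_num
    _ = 2 * ∑ a, P a * Real.log (P a / Q a) := by ring
  nlinarith [abs_nonneg (fun a => |P a - Q a|), sq_nonneg (∑ a, |P a - Q a|)]

section basics
open Classical
variable {Ω α β : Type*} [Fintype Ω] [Fintype α] [Fintype β] {μ : Ω → ℝ}

lemma pr_nonneg (h0 : ∀ ω, 0 ≤ μ ω) (p : Ω → Prop) : 0 ≤ pr μ p := by
  unfold pr
  apply Finset.sum_nonneg
  intro ω _
  split <;> simp [h0 ω]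

lemma pr_mono (h0 : ∀ ω, 0 ≤ μ ω) {p q : Ω → Prop} (h : ∀ ω, p ω → q ω) :
    pr μ p ≤ pr μ q := by
  unfold pr
  apply Finset.sum_le_sum
  intro ω _
  split_ifs with h1 h2
  · exact le_refl _
  · exact absurd (h ω h1) h2
  · exact h0 ω
  · exact le_refl _

lemma pr_congr {p q : Ω → Prop} (h : ∀ ω, p ω ↔ q ω) : pr μ p = pr μ q := by
  unfold pr
  exact Finset.sum_congr rfl fun ω _ => if_congr (h ω) rfl rfl

lemma sum_pr (f : Ω → α) (p : Ω → Prop) :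
    ∑ a, pr μ (fun ω => f ω = a ∧ p ω) = pr μ p := by
  unfold pr
  rw [Finset.sum_comm]
  apply Finset.sum_congr rfl
  intro ω _
  by_cases hp : p ω
  · simp [hp, Finset.sum_ite_eq]
  · simp [hp]

lemma pr_true (h1 : ∑ ω, μ ω = 1) : pr μ (fun _ => True) = 1 := by
  simp [pr, h1]

lemma condEntropy_eq (h0 : ∀ ω, 0 ≤ μ ω) (f : Ω → α) (g : Ω → β) :
    condEntropy μ f g
      = ∑ b, pr μ (fun ω => g ω = b) * Real.logb 2 (pr μ (fun ω => g ω = b))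
        - ∑ b, ∑ a, pr μ (fun ω => f ω = a ∧ g ω = b) *
            Real.logb 2 (pr μ (fun ω => f ω = a ∧ g ω = b)) := by
  unfold condEntropy
  rw [← Finset.sum_sub_distrib]
  apply Finset.sum_congr rfl
  intro b _
  have hB0 : 0 ≤ pr μ (fun ω => g ω = b) := pr_nonneg h0 _
  have hJ0 : ∀ a, 0 ≤ pr μ (fun ω => f ω = a ∧ g ω = b) := fun a => pr_nonneg h0 _
  have hJB : ∀ a, pr μ (fun ω => f ω = a ∧ g ω = b) ≤ pr μ (fun ω => g ω = b) :=
    fun a => pr_mono h0 (fun ω h => h.2)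
  have hsum : ∑ a, pr μ (fun ω => f ω = a ∧ g ω = b) = pr μ (fun ω => g ω = b) :=
    sum_pr f _
  rcases eq_or_lt_of_le hB0 with hB | hB
  · have hz : ∀ a, pr μ (fun ω => f ω = a ∧ g ω = b) = 0 :=
      fun a => le_antisymm (le_of_le_of_eq (hJB a) hB.symm) (hJ0 a)
    simp [entropyOf, condLaw, ← hB, hz]
  · have hBne : pr μ (fun ω => g ω = b) ≠ 0 := hB.ne'
    calc pr μ (fun ω => g ω = b) * entropyOf (condLaw μ f (fun ω => g ω = b))
        = -∑ a, pr μ (fun ω => f ω = a ∧ g ω = b) *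
            Real.logb 2 (pr μ (fun ω => f ω = a ∧ g ω = b) / pr μ (fun ω => g ω = b)) := by
          unfold entropyOf condLaw
          rw [mul_neg, Finset.mul_sum]
          congr 1
          apply Finset.sum_congr rfl
          intro a _
          rw [← mul_assoc, mul_div_cancel₀ _ hBne]
      _ = -∑ a, (pr μ (fun ω => f ω = a ∧ g ω = b) *
              Real.logb 2 (pr μ (fun ω => f ω = a ∧ g ω = b))
            - pr μ (fun ω => f ω = a ∧ g ω = b) * Real.logb 2 (pr μ (fun ω => g ω = b))) := by
          congr 1
          apply Finset.sum_congr rfl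
          intro a _
          rcases eq_or_lt_of_le (hJ0 a) with hJ | hJ
          · simp [← hJ]
          · rw [Real.logb_div hJ.ne' hBne]; ring
      _ = pr μ (fun ω => g ω = b) * Real.logb 2 (pr μ (fun ω => g ω = b))
            - ∑ a, pr μ (fun ω => f ω = a ∧ g ω = b) *
                Real.logb 2 (pr μ (fun ω => f ω = a ∧ g ω = b)) := by
          rw [Finset.sum_sub_distrib, ← Finset.sum_mul, hsum]
          ring

end basics


lemma cmi_identity {W U V : Type*} [Fintype W] [Fintype U] [Fintype V]
    (μ : W × U × V → ℝ) (h0 : ∀ ω, 0 ≤ μ ω) (h1 : ∑ ω, μ ω = 1) :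
    condMutualInfo μ (fun ω => ω.1) (fun ω => ω.2.2) (fun ω => ω.2.1)
      = ∑ p : U × V, pr μ (fun ω => ω.2 = p) *
          ∑ z, condLaw μ (fun ω => ω.1) (fun ω => ω.2 = p) z *
            Real.logb 2 (condLaw μ (fun ω => ω.1) (fun ω => ω.2 = p) z /
              condLaw μ (fun ω => ω.1) (fun ω => ω.2.1 = p.1) z) := by
  -- abbreviations (as plain defs via `have` of equalities is unworkable; use full forms)
  -- marginal facts
  have mDB : ∀ p : U × V, ∑ z, pr μ (fun ω => ω.1 = z ∧ ω.2 = p) = pr μ (fun ω => ω.2 = p) :=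
    fun p => sum_pr _ _
  have mCA : ∀ x : U, ∑ z, pr μ (fun ω => ω.1 = z ∧ ω.2.1 = x) = pr μ (fun ω => ω.2.1 = x) :=
    fun x => sum_pr _ _
  have mBA : ∀ x : U, ∑ y, pr μ (fun ω => ω.2 = (x, y)) = pr μ (fun ω => ω.2.1 = x) := by
    intro x
    rw [← sum_pr (fun ω : W × U × V => ω.2.2) (fun ω => ω.2.1 = x)]
    exact Finset.sum_congr rfl fun y _ => pr_congr fun ω => by
      simp only [Prod.ext_iff]; tauto
  have mDC : ∀ (z : W) (x : U), ∑ y, pr μ (fun ω => ω.1 = z ∧ ω.2 = (x, y))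
      = pr μ (fun ω => ω.1 = z ∧ ω.2.1 = x) := by
    intro z x
    rw [← sum_pr (fun ω : W × U × V => ω.2.2) (fun ω => ω.1 = z ∧ ω.2.1 = x)]
    exact Finset.sum_congr rfl fun y _ => pr_congr fun ω => by
      simp only [Prod.ext_iff]; tauto
  -- key pointwise identity
  have key : ∀ (p : U × V) (z : W),
      pr μ (fun ω => ω.2 = p) *
        (pr μ (fun ω => ω.1 = z ∧ ω.2 = p) / pr μ (fun ω => ω.2 = p) *
          Real.logb 2 ((pr μ (fun ω => ω.1 = z ∧ ω.2 = p) / pr μ (fun ω => ω.2 = p)) /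
            (pr μ (fun ω => ω.1 = z ∧ ω.2.1 = p.1) / pr μ (fun ω => ω.2.1 = p.1))))
      = pr μ (fun ω => ω.1 = z ∧ ω.2 = p) * Real.logb 2 (pr μ (fun ω => ω.1 = z ∧ ω.2 = p))
        - pr μ (fun ω => ω.1 = z ∧ ω.2 = p) * Real.logb 2 (pr μ (fun ω => ω.2 = p))
        + pr μ (fun ω => ω.1 = z ∧ ω.2 = p) * Real.logb 2 (pr μ (fun ω => ω.2.1 = p.1))
        - pr μ (fun ω => ω.1 = z ∧ ω.2 = p) *
            Real.logb 2 (pr μ (fun ω => ω.1 = z ∧ ω.2.1 = p.1)) := by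
    intro p z
    rcases eq_or_lt_of_le (pr_nonneg h0 (fun ω => ω.1 = z ∧ ω.2 = p)) with hD | hD
    · rw [← hD]; simp
    · have hDB : pr μ (fun ω => ω.1 = z ∧ ω.2 = p) ≤ pr μ (fun ω => ω.2 = p) :=
        pr_mono h0 fun ω h => h.2
      have hDC : pr μ (fun ω => ω.1 = z ∧ ω.2 = p) ≤ pr μ (fun ω => ω.1 = z ∧ ω.2.1 = p.1) :=
        pr_mono h0 fun ω h => ⟨h.1, by rw [h.2]⟩
      have hBA : pr μ (fun ω => ω.2 = p) ≤ pr μ (fun ω => ω.2.1 = p.1) :=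
        pr_mono h0 fun ω h => by rw [h]
      have hB : 0 < pr μ (fun ω => ω.2 = p) := lt_of_lt_of_le hD hDB
      have hC : 0 < pr μ (fun ω => ω.1 = z ∧ ω.2.1 = p.1) := lt_of_lt_of_le hD hDC
      have hA : 0 < pr μ (fun ω => ω.2.1 = p.1) := lt_of_lt_of_le hB hBA
      rw [Real.logb_div (by positivity) (by positivity),
        Real.logb_div hD.ne' hB.ne', Real.logb_div hC.ne' hA.ne',
        ← mul_assoc, mul_div_cancel₀ _ hB.ne']
      ring
  -- RHS:
  have rhsEq : ∑ p : U × V, pr μ (fun ω => ω.2 = p) *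
          ∑ z, condLaw μ (fun ω => ω.1) (fun ω => ω.2 = p) z *
            Real.logb 2 (condLaw μ (fun ω => ω.1) (fun ω => ω.2 = p) z /
              condLaw μ (fun ω => ω.1) (fun ω => ω.2.1 = p.1) z)
      = ∑ p : U × V, ∑ z,
          (pr μ (fun ω => ω.1 = z ∧ ω.2 = p) * Real.logb 2 (pr μ (fun ω => ω.1 = z ∧ ω.2 = p))
          - pr μ (fun ω => ω.1 = z ∧ ω.2 = p) * Real.logb 2 (pr μ (fun ω => ω.2 = p))
          + pr μ (fun ω => ω.1 = z ∧ ω.2 = p) * Real.logb 2 (pr μ (fun ω => ω.2.1 = p.1))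
          - pr μ (fun ω => ω.1 = z ∧ ω.2 = p) *
              Real.logb 2 (pr μ (fun ω => ω.1 = z ∧ ω.2.1 = p.1))) := by
    simp only [condLaw]
    exact Finset.sum_congr rfl fun p _ => by
      rw [Finset.mul_sum]
      exact Finset.sum_congr rfl fun z _ => key p z
    -- four split sums
  have e1 : (∑ p : U × V, ∑ z : W, pr μ (fun ω => ω.1 = z ∧ ω.2 = p) *
        Real.logb 2 (pr μ (fun ω => ω.1 = z ∧ ω.2 = p)))
      = ∑ x : U, ∑ z : W, ∑ y : V, pr μ (fun ω => ω.1 = z ∧ ω.2 = (x, y)) *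
          Real.logb 2 (pr μ (fun ω => ω.1 = z ∧ ω.2 = (x, y))) := by
    rw [Fintype.sum_prod_type]
    exact Finset.sum_congr rfl fun x _ => Finset.sum_comm
  have e2 : (∑ p : U × V, ∑ z : W, pr μ (fun ω => ω.1 = z ∧ ω.2 = p) *
        Real.logb 2 (pr μ (fun ω => ω.2 = p)))
      = ∑ x : U, ∑ y : V, pr μ (fun ω => ω.2 = (x, y)) *
          Real.logb 2 (pr μ (fun ω => ω.2 = (x, y))) := by
    simp only [← Finset.sum_mul, mDB]
    rw [Fintype.sum_prod_type]
  have e3 : (∑ p : U × V, ∑ z : W, pr μ (fun ω => ω.1 = z ∧ ω.2 = p) *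
        Real.logb 2 (pr μ (fun ω => ω.2.1 = p.1)))
      = ∑ x : U, pr μ (fun ω => ω.2.1 = x) * Real.logb 2 (pr μ (fun ω => ω.2.1 = x)) := by
    simp only [← Finset.sum_mul, mDB]
    simp only [Fintype.sum_prod_type]
    exact Finset.sum_congr rfl fun x _ => by rw [← Finset.sum_mul, mBA]
  have e4 : (∑ p : U × V, ∑ z : W, pr μ (fun ω => ω.1 = z ∧ ω.2 = p) *
        Real.logb 2 (pr μ (fun ω => ω.1 = z ∧ ω.2.1 = p.1)))
      = ∑ x : U, ∑ z : W, pr μ (fun ω => ω.1 = z ∧ ω.2.1 = x) *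
          Real.logb 2 (pr μ (fun ω => ω.1 = z ∧ ω.2.1 = x)) := by
    simp only [Fintype.sum_prod_type]
    refine Finset.sum_congr rfl fun x _ => ?_
    rw [Finset.sum_comm]
    exact Finset.sum_congr rfl fun z _ => by rw [← Finset.sum_mul, mDC]
  -- LHS
  have hYB : ∀ (x : U) (y : V), pr μ (fun ω : W × U × V => ω.2.2 = y ∧ ω.2.1 = x)
      = pr μ (fun ω => ω.2 = (x, y)) :=
    fun x y => pr_congr fun ω => by simp only [Prod.ext_iff]; tauto
  have hZY : ∀ (x : U) (zy : W × V), pr μ (fun ω : W × U × V => (ω.1, ω.2.2) = zy ∧ ω.2.1 = x)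
      = pr μ (fun ω => ω.1 = zy.1 ∧ ω.2 = (x, zy.2)) :=
    fun x zy => pr_congr fun ω => by simp only [Prod.ext_iff]; tauto
  have LHSeq : condMutualInfo μ (fun ω => ω.1) (fun ω => ω.2.2) (fun ω => ω.2.1)
      = (∑ x : U, pr μ (fun ω => ω.2.1 = x) * Real.logb 2 (pr μ (fun ω => ω.2.1 = x)))
        + (∑ x : U, ∑ z : W, ∑ y : V, pr μ (fun ω => ω.1 = z ∧ ω.2 = (x, y)) *
            Real.logb 2 (pr μ (fun ω => ω.1 = z ∧ ω.2 = (x, y))))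
        - (∑ x : U, ∑ z : W, pr μ (fun ω => ω.1 = z ∧ ω.2.1 = x) *
            Real.logb 2 (pr μ (fun ω => ω.1 = z ∧ ω.2.1 = x)))
        - (∑ x : U, ∑ y : V, pr μ (fun ω => ω.2 = (x, y)) *
            Real.logb 2 (pr μ (fun ω => ω.2 = (x, y)))) := by
    simp only [condMutualInfo]
    rw [condEntropy_eq h0, condEntropy_eq h0, condEntropy_eq h0]
    simp only [hYB, hZY, Fintype.sum_prod_type]
    ring
  rw [rhsEq, LHSeq]
  simp only [Finset.sum_sub_distrib, Finset.sum_add_distrib]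
  rw [e1, e2, e3, e4]
  ring

lemma per_point {W U V : Type*} [Fintype W] [Fintype U] [Fintype V]
    (μ : W × U × V → ℝ) (h0 : ∀ ω, 0 ≤ μ ω) (p : U × V)
    (hp : 0 < pr μ (fun ω => ω.2 = p)) :
    tvDist (condLaw μ (fun ω => ω.1) (fun ω => ω.2.1 = p.1))
        (condLaw μ (fun ω => ω.1) (fun ω => ω.2 = p)) ^ 2
      ≤ (Real.log 2 / 2) *
          ∑ z, condLaw μ (fun ω => ω.1) (fun ω => ω.2 = p) z *
            Real.logb 2 (condLaw μ (fun ω => ω.1) (fun ω => ω.2 = p) z /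
              condLaw μ (fun ω => ω.1) (fun ω => ω.2.1 = p.1) z) := by
  have hBA : pr μ (fun ω : W × U × V => ω.2 = p) ≤ pr μ (fun ω => ω.2.1 = p.1) :=
    pr_mono h0 fun ω h => by rw [h]
  have hA : 0 < pr μ (fun ω : W × U × V => ω.2.1 = p.1) := lt_of_lt_of_le hp hBA
  have hP0 : ∀ z, 0 ≤ condLaw μ (fun ω : W × U × V => ω.1) (fun ω => ω.2 = p) z :=
    fun z => div_nonneg (pr_nonneg h0 _) (pr_nonneg h0 _)
  have hQ0 : ∀ z, 0 ≤ condLaw μ (fun ω : W × U × V => ω.1) (fun ω => ω.2.1 = p.1) z :=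
    fun z => div_nonneg (pr_nonneg h0 _) (pr_nonneg h0 _)
  have hP1 : ∑ z, condLaw μ (fun ω : W × U × V => ω.1) (fun ω => ω.2 = p) z = 1 := by
    unfold condLaw
    rw [← Finset.sum_div, sum_pr, div_self hp.ne']
  have hQ1 : ∑ z, condLaw μ (fun ω : W × U × V => ω.1) (fun ω => ω.2.1 = p.1) z = 1 := by
    unfold condLaw
    rw [← Finset.sum_div, sum_pr, div_self hA.ne']
  have hac : ∀ z, condLaw μ (fun ω : W × U × V => ω.1) (fun ω => ω.2.1 = p.1) z = 0 →
      condLaw μ (fun ω : W × U × V => ω.1) (fun ω => ω.2 = p) z = 0 := by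
    intro z hz
    unfold condLaw at hz ⊢
    rcases div_eq_zero_iff.1 hz with hC | hA'
    · have hDC : pr μ (fun ω : W × U × V => (fun ω : W × U × V => ω.1) ω = z ∧ ω.2 = p)
          ≤ pr μ (fun ω : W × U × V => (fun ω : W × U × V => ω.1) ω = z ∧ ω.2.1 = p.1) :=
        pr_mono h0 fun ω h => ⟨h.1, by rw [h.2]⟩
      have := le_antisymm (le_of_le_of_eq hDC hC) (pr_nonneg h0 _)
      rw [this, zero_div]
    · exact absurd hA' hA.ne'
  have hpin := pinsker_sum _ _ hP0 hQ0 hP1 hQ1 hac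
  have hlog2 : (0:ℝ) < Real.log 2 := Real.log_pos one_lt_two
  calc tvDist (condLaw μ (fun ω : W × U × V => ω.1) (fun ω => ω.2.1 = p.1))
        (condLaw μ (fun ω => ω.1) (fun ω => ω.2 = p)) ^ 2
      ≤ (1/2) * ∑ z, condLaw μ (fun ω : W × U × V => ω.1) (fun ω => ω.2 = p) z *
          Real.log (condLaw μ (fun ω : W × U × V => ω.1) (fun ω => ω.2 = p) z /
            condLaw μ (fun ω => ω.1) (fun ω => ω.2.1 = p.1) z) := hpin
    _ = (Real.log 2 / 2) *
          ∑ z, condLaw μ (fun ω : W × U × V => ω.1) (fun ω => ω.2 = p) z *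
            Real.logb 2 (condLaw μ (fun ω : W × U × V => ω.1) (fun ω => ω.2 = p) z /
              condLaw μ (fun ω => ω.1) (fun ω => ω.2.1 = p.1) z) := by
        simp only [Real.logb]
        rw [Finset.mul_sum, Finset.mul_sum]
        apply Finset.sum_congr rfl
        intro z _
        have h2 : Real.log 2 ≠ 0 := hlog2.ne'
        field_simp

/-- For jointly distributed `(Z, X, Y)`, the expected squared total variation distance
between the law of `Z` given `X = x` and the law of `Z` given `X = x, Y = y` is at most
`(ln 2 / 2) · I(Z ; Y | X)`. -/
theorem expected_sq_tv_le_condMutualInfo {W U V : Type*} [Fintype W] [Fintype U] [Fintype V]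
    (μ : W × U × V → ℝ) (h0 : ∀ ω, 0 ≤ μ ω) (h1 : ∑ ω, μ ω = 1) :
    ∑ p ∈ Finset.univ.filter (fun p : U × V => 0 < pr μ (fun ω => ω.2 = p)),
        pr μ (fun ω => ω.2 = p) *
          (tvDist (condLaw μ (fun ω => ω.1) (fun ω => ω.2.1 = p.1))
            (condLaw μ (fun ω => ω.1) (fun ω => ω.2 = p))) ^ 2
      ≤ (Real.log 2 / 2) *
          condMutualInfo μ (fun ω => ω.1) (fun ω => ω.2.2) (fun ω => ω.2.1) := by
    classical
  have hId := cmi_identity μ h0 h1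
  rw [hId, Finset.mul_sum]
  have hfilt : ∀ p ∈ (Finset.univ : Finset (U × V)),
      (Real.log 2 / 2 *
        ((pr μ fun ω => ω.2 = p) *
          ∑ z, condLaw μ (fun ω => ω.1) (fun ω => ω.2 = p) z *
            Real.logb 2 (condLaw μ (fun ω => ω.1) (fun ω => ω.2 = p) z /
              condLaw μ (fun ω => ω.1) (fun ω => ω.2.1 = p.1) z))) ≠ 0 →
      0 < pr μ (fun ω : W × U × V => ω.2 = p) := by
    intro p _ hne
    by_contra hB
    apply hne
    have hz : pr μ (fun ω : W × U × V => ω.2 = p) = 0 :=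
      le_antisymm (not_lt.1 hB) (pr_nonneg h0 _)
    rw [hz]
    ring
  rw [← Finset.sum_filter_of_ne hfilt]
  apply Finset.sum_le_sum
  intro p hp
  have hp' : 0 < pr μ (fun ω : W × U × V => ω.2 = p) := (Finset.mem_filter.1 hp).2
  calc pr μ (fun ω : W × U × V => ω.2 = p) *
        tvDist (condLaw μ (fun ω => ω.1) (fun ω => ω.2.1 = p.1))
          (condLaw μ (fun ω => ω.1) (fun ω => ω.2 = p)) ^ 2
      ≤ pr μ (fun ω : W × U × V => ω.2 = p) *
          ((Real.log 2 / 2) *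
            ∑ z, condLaw μ (fun ω => ω.1) (fun ω => ω.2 = p) z *
              Real.logb 2 (condLaw μ (fun ω => ω.1) (fun ω => ω.2 = p) z /
                condLaw μ (fun ω => ω.1) (fun ω => ω.2.1 = p.1) z)) :=
        mul_le_mul_of_nonneg_left (per_point μ h0 p hp') (pr_nonneg h0 _)
    _ = Real.log 2 / 2 *
          ((pr μ fun ω : W × U × V => ω.2 = p) *
            ∑ z, condLaw μ (fun ω => ω.1) (fun ω => ω.2 = p) z *
              Real.logb 2 (condLaw μ (fun ω => ω.1) (fun ω => ω.2 = p) z /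
                condLaw μ (fun ω => ω.1) (fun ω => ω.2.1 = p.1) z)) := by ring
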